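/- arXiv:2204.12483 — 2 statements merged into one kernel-verified Lean document; each statement's English description precedes it below -/
import Mathlib

section
/- The map ℤ/rℤ × ℤ/mℤ → G sending (a,b) to η₁^a · η₂^b is a well-defined bijection of sets (in particular η₁ and η₂ generate G). -/
open Complex

/-- The homomorphism `φ : (ℂ*)³ → (ℂ*)³`, `φ(t₁,t₂,t₃) = (t₁^r, t₁^{-s} t₂^m, t₁t₂t₃)`. -/
noncomputable def phi (r m s : ℕ) : (ℂˣ × ℂˣ × ℂˣ) →* (ℂˣ × ℂˣ × ℂˣ) where
  toFun t := (t.1 ^ r, t.1 ^ (-(s : ℤ)) * t.2.1 ^ m, t.1 * t.2.1 * t.2.2)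
  map_one' := by simp
  map_mul' x y := by
    refine Prod.ext ?_ (Prod.ext ?_ ?_) <;> dsimp <;>
      simp [mul_pow, mul_zpow, mul_comm, mul_assoc, mul_left_comm]

/-- `exp z` as an element of `ℂˣ`. -/
noncomputable def unitExp (z : ℂ) : ℂˣ := Units.mk0 (Complex.exp z) (Complex.exp_ne_zero z)

/-- `η₁ = (e^{2πi/r}, e^{2πi s/(rm)}, e^{-2πi(m+s)/(rm)})`. -/
noncomputable def eta1 (r m s : ℕ) : ℂˣ × ℂˣ × ℂˣ :=
  (unitExp (2 * (Real.pi : ℂ) * Complex.I / (r : ℂ)),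
   unitExp (2 * (Real.pi : ℂ) * Complex.I * (s : ℂ) / ((r : ℂ) * (m : ℂ))),
   unitExp (-(2 * (Real.pi : ℂ) * Complex.I * ((m : ℂ) + (s : ℂ))) / ((r : ℂ) * (m : ℂ))))

/-- `η₂ = (1, e^{2πi/m}, e^{-2πi/m})`. -/
noncomputable def eta2 (m : ℕ) : ℂˣ × ℂˣ × ℂˣ :=
  (1,
   unitExp (2 * (Real.pi : ℂ) * Complex.I / (m : ℂ)),
   unitExp (-(2 * (Real.pi : ℂ) * Complex.I) / (m : ℂ)))

lemma unitExp_val (z : ℂ) : ((unitExp z : ℂˣ) : ℂ) = Complex.exp z := rfl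

lemma unitExp_pow (z : ℂ) (n : ℕ) : unitExp z ^ n = unitExp (n * z) := by
  ext; simp [unitExp, Complex.exp_nat_mul]

lemma unitExp_mul (z w : ℂ) : unitExp z * unitExp w = unitExp (z + w) := by
  ext; simp [unitExp, Complex.exp_add]

lemma unitExp_eq_one_iff (z : ℂ) :
    unitExp z = 1 ↔ ∃ n : ℤ, z = n * (2 * (Real.pi : ℂ) * Complex.I) := by
  rw [Units.ext_iff, unitExp_val, Units.val_one, Complex.exp_eq_one_iff]

lemma prod_fst (r m s a b : ℕ) :
    (eta1 r m s ^ a * eta2 m ^ b).1 = unitExp (2 * (Real.pi : ℂ) * Complex.I * a / r) := by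
  have : (eta1 r m s ^ a * eta2 m ^ b).1 = (eta1 r m s).1 ^ a * (eta2 m).1 ^ b := rfl
  rw [this]
  simp only [eta1, eta2, one_pow, mul_one, unitExp_pow]
  congr 1; ring

lemma prod_snd (r m s a b : ℕ) (hr : (r:ℂ) ≠ 0) (hm : (m:ℂ) ≠ 0) :
    (eta1 r m s ^ a * eta2 m ^ b).2.1
      = unitExp (2 * (Real.pi : ℂ) * Complex.I * (a * s + b * r) / (r * m)) := by
  have : (eta1 r m s ^ a * eta2 m ^ b).2.1 = (eta1 r m s).2.1 ^ a * (eta2 m).2.1 ^ b := rfl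
  rw [this]
  simp only [eta1, eta2, unitExp_pow, unitExp_mul]
  congr 1; field_simp

lemma prod_trd (r m s a b : ℕ) (hr : (r:ℂ) ≠ 0) (hm : (m:ℂ) ≠ 0) :
    (eta1 r m s ^ a * eta2 m ^ b).2.2
      = unitExp (-(2 * (Real.pi : ℂ) * Complex.I * (a * (m + s) + b * r)) / (r * m)) := by
  have : (eta1 r m s ^ a * eta2 m ^ b).2.2 = (eta1 r m s).2.2 ^ a * (eta2 m).2.2 ^ b := rfl
  rw [this]
  simp only [eta1, eta2, unitExp_pow, unitExp_mul]
  congr 1; field_simp; ring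

lemma mem_ker_eta (r m s a b : ℕ) (hr : (r:ℂ) ≠ 0) (hm : (m:ℂ) ≠ 0) :
    eta1 r m s ^ a * eta2 m ^ b ∈ MonoidHom.ker (phi r m s) := by
  rw [MonoidHom.mem_ker]
  have h1 := prod_fst r m s a b
  have h2 := prod_snd r m s a b hr hm
  have h3 := prod_trd r m s a b hr hm
  refine Prod.ext ?_ (Prod.ext ?_ ?_) <;>
    simp only [phi, MonoidHom.coe_mk, OneHom.coe_mk, h1, h2, h3, Prod.fst_one, Prod.snd_one]
  · rw [unitExp_pow, unitExp_eq_one_iff]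
    exact ⟨a, by push_cast; field_simp⟩
  · rw [Units.ext_iff, Units.val_mul, Units.val_zpow_eq_zpow_val, unitExp_val, unitExp_pow,
      unitExp_val, ← Complex.exp_int_mul, ← Complex.exp_add, Units.val_one,
      Complex.exp_eq_one_iff]
    exact ⟨b, by push_cast; field_simp; ring⟩
  · rw [unitExp_mul, unitExp_mul, unitExp_eq_one_iff]
    exact ⟨0, by push_cast; field_simp; ring⟩
lemma cancel_aux (c' : ℂ) (hc : c' ≠ 0) (R : ℂ) (hR : R ≠ 0) (A B : ℂ) (k : ℤ)
    (h : c' * A / R = c' * B / R + k * c') : A = B + k * R := by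
  field_simp at h
  have h2 : c' * A = c' * (B + k * R) := by linear_combination c' * h
  exact mul_left_cancel₀ hc h2

theorem eta_bijection' (r m s : ℕ) (hr : 1 ≤ r) (hm : 1 ≤ m) (hs : s ≤ r - 1) :
    Set.BijOn (fun ab : ZMod r × ZMod m => eta1 r m s ^ ab.1.val * eta2 m ^ ab.2.val)
      Set.univ (MonoidHom.ker (phi r m s) : Set (ℂˣ × ℂˣ × ℂˣ)) := by
  haveI : NeZero r := ⟨by omega⟩
  haveI : NeZero m := ⟨by omega⟩
  have hr' : (r : ℂ) ≠ 0 := Nat.cast_ne_zero.mpr (by omega)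
  have hm' : (m : ℂ) ≠ 0 := Nat.cast_ne_zero.mpr (by omega)
  have hc : (2 * (Real.pi : ℂ) * Complex.I) ≠ 0 := by
    refine mul_ne_zero (mul_ne_zero two_ne_zero ?_) Complex.I_ne_zero
    exact_mod_cast Complex.ofReal_ne_zero.mpr Real.pi_ne_zero
  refine ⟨fun ab _ => mem_ker_eta r m s _ _ hr' hm', ?_, ?_⟩
  · -- injective
    intro x _ y _ h
    dsimp only at h
    -- first components
    have h1 := congrArg Prod.fst h
    rw [prod_fst, prod_fst] at h1
    have h1' := congrArg Units.val h1
    rw [unitExp_val, unitExp_val, Complex.exp_eq_exp_iff_exists_int] at h1'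
    obtain ⟨k, hk⟩ := h1'
    have hA : ((x.1.val : ℂ)) = (y.1.val : ℂ) + k * r := cancel_aux _ hc _ hr' _ _ k hk
    have hAz : (x.1.val : ℤ) = (y.1.val : ℤ) + k * r := by exact_mod_cast hA
    have hxr : x.1.val < r := ZMod.val_lt x.1
    have hyr : y.1.val < r := ZMod.val_lt y.1
    have hdvd : (r : ℤ) ∣ ((x.1.val : ℤ) - y.1.val) := ⟨k, by rw [hAz]; ring⟩
    have h0 : ((x.1.val : ℤ) - y.1.val) = 0 := by
      refine Int.eq_zero_of_abs_lt_dvd hdvd ?_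
      rw [abs_lt]; constructor <;> [omega; omega]
    have hxy1 : x.1 = y.1 := ZMod.val_injective r (by omega)
    -- second components
    have h2 := congrArg (fun p : ℂˣ × ℂˣ × ℂˣ => p.2.1) h
    rw [prod_snd r m s _ _ hr' hm', prod_snd r m s _ _ hr' hm'] at h2
    have h2' := congrArg Units.val h2
    rw [unitExp_val, unitExp_val, Complex.exp_eq_exp_iff_exists_int] at h2'
    obtain ⟨k2, hk2⟩ := h2'
    have hB := cancel_aux _ hc _ (mul_ne_zero hr' hm') _ _ k2 hk2
    have hBz : ((x.1.val : ℤ) * s + x.2.val * r) = (y.1.val * s + y.2.val * r) + k2 * (r * m) := by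
      exact_mod_cast hB
    have hxm : x.2.val < m := ZMod.val_lt x.2
    have hym : y.2.val < m := ZMod.val_lt y.2
    have hv : (x.1.val : ℤ) = y.1.val := by omega
    have heq : ((x.2.val : ℤ) - y.2.val) * r = (k2 * m) * r := by
      linear_combination hBz - (s : ℤ) * hv
    have heq2 : ((x.2.val : ℤ) - y.2.val) = k2 * m :=
      mul_right_cancel₀ (by exact_mod_cast (Nat.cast_ne_zero (R := ℤ)).mpr (by omega)) heq
    have h02 : ((x.2.val : ℤ) - y.2.val) = 0 := by
      have hdvd2 : (m : ℤ) ∣ ((x.2.val : ℤ) - y.2.val) := ⟨k2, by rw [heq2, mul_comm]⟩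
      refine Int.eq_zero_of_abs_lt_dvd hdvd2 ?_
      rw [abs_lt]; constructor <;> [omega; omega]
    have hxy2 : x.2 = y.2 := ZMod.val_injective m (by omega)
    exact Prod.ext hxy1 hxy2
  · -- surjective
    intro t ht
    simp only [MonoidHom.mem_ker, SetLike.mem_coe] at ht
    have e1 : t.1 ^ r = 1 := congrArg Prod.fst ht
    have e2 : t.1 ^ (-(s:ℤ)) * t.2.1 ^ m = 1 := congrArg (fun p : ℂˣ × ℂˣ × ℂˣ => p.2.1) ht
    have e3 : t.1 * t.2.1 * t.2.2 = 1 := congrArg (fun p : ℂˣ × ℂˣ × ℂˣ => p.2.2) ht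
    -- t.1 is an r-th root of unity
    have e1' : ((t.1 : ℂ)) ^ r = 1 := by rw [← Units.val_pow_eq_pow_val, e1]; rfl
    obtain ⟨a, ha, hpa⟩ := (Complex.isPrimitiveRoot_exp r (by omega)).eq_pow_of_pow_eq_one e1'
    have hpa' : Complex.exp (2 * (Real.pi:ℂ) * Complex.I * a / r) = (t.1 : ℂ) := by
      rw [← hpa, ← Complex.exp_nat_mul]; congr 1; ring
    -- t.2.1
    have e2' : ((t.2.1 : ℂ)) ^ m = (t.1 : ℂ) ^ s := by
      have := congrArg Units.val e2
      push_cast at this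
      have hs' : (t.1 : ℂ) ^ (-(s:ℤ)) * (t.2.1 : ℂ) ^ (m:ℕ) = 1 := by exact_mod_cast this
      have h1 : (t.1:ℂ) ≠ 0 := Units.ne_zero _
      rw [zpow_neg, zpow_natCast, inv_mul_eq_one₀ (pow_ne_zero _ h1)] at hs'
      exact hs'.symm
    set w : ℂ := (t.2.1 : ℂ) * Complex.exp (-(2 * (Real.pi:ℂ) * Complex.I * a * s) / (r * m)) with hw
    have hwm : w ^ m = 1 := by
      rw [hw, mul_pow, ← Complex.exp_nat_mul, e2', ← hpa', ← Complex.exp_nat_mul,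
        ← Complex.exp_add, Complex.exp_eq_one_iff]
      exact ⟨0, by push_cast; field_simp; ring⟩
    obtain ⟨b, hb, hpb⟩ := (Complex.isPrimitiveRoot_exp m (by omega)).eq_pow_of_pow_eq_one hwm
    have hpb' : (t.2.1 : ℂ) = Complex.exp (2 * (Real.pi:ℂ) * Complex.I * (a * s + b * r) / (r * m)) := by
      have : w = Complex.exp (2 * (Real.pi:ℂ) * Complex.I * b / m) := by
        rw [← hpb, ← Complex.exp_nat_mul]; congr 1; ring
      rw [hw] at this
      have := congrArg (fun z => z * Complex.exp (2 * (Real.pi:ℂ) * Complex.I * a * s / (r * m))) this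
      rw [mul_assoc, ← Complex.exp_add, ← Complex.exp_add] at this
      rw [show -(2 * (Real.pi:ℂ) * Complex.I * a * s) / (r * m)
            + 2 * (Real.pi:ℂ) * Complex.I * a * s / (r * m) = 0 from by ring,
        Complex.exp_zero, mul_one] at this
      rw [this]; congr 1; field_simp; ring
    refine ⟨((a : ZMod r), (b : ZMod m)), Set.mem_univ _, ?_⟩
    dsimp only
    rw [ZMod.val_cast_of_lt ha, ZMod.val_cast_of_lt hb]
    have hfst : (eta1 r m s ^ a * eta2 m ^ b).1 = t.1 := by
      rw [prod_fst]; ext; rw [unitExp_val, hpa']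
    have hsnd : (eta1 r m s ^ a * eta2 m ^ b).2.1 = t.2.1 := by
      rw [prod_snd r m s a b hr' hm']; ext; rw [unitExp_val, hpb']
    have hker := mem_ker_eta r m s a b hr' hm'
    rw [MonoidHom.mem_ker] at hker
    have e3' : (eta1 r m s ^ a * eta2 m ^ b).1 * (eta1 r m s ^ a * eta2 m ^ b).2.1
        * (eta1 r m s ^ a * eta2 m ^ b).2.2 = 1 := congrArg (fun p : ℂˣ × ℂˣ × ℂˣ => p.2.2) hker
    have htrd : (eta1 r m s ^ a * eta2 m ^ b).2.2 = t.2.2 := by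
      have ht3 : t.2.2 = (t.1 * t.2.1)⁻¹ := by
        rw [eq_inv_iff_mul_eq_one, mul_comm]; exact e3
      have hu3 : (eta1 r m s ^ a * eta2 m ^ b).2.2
          = ((eta1 r m s ^ a * eta2 m ^ b).1 * (eta1 r m s ^ a * eta2 m ^ b).2.1)⁻¹ := by
        rw [eq_inv_iff_mul_eq_one, mul_comm]; exact e3'
      rw [hu3, ht3, hfst, hsnd]
    exact Prod.ext hfst (Prod.ext hsnd htrd)
/-- The map `ℤ/rℤ × ℤ/mℤ → G`, `(a,b) ↦ η₁^a · η₂^b`, is a well-defined bijection of sets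
onto `G = ker φ` (in particular `η₁` and `η₂` generate `G`). -/
theorem eta_bijection (r m s : ℕ) (hr : 1 ≤ r) (hm : 1 ≤ m) (hs : s ≤ r - 1) :
    Set.BijOn (fun ab : ZMod r × ZMod m => eta1 r m s ^ ab.1.val * eta2 m ^ ab.2.val)
      Set.univ (MonoidHom.ker (phi r m s) : Set (ℂˣ × ℂˣ × ℂˣ)) := by
  exact eta_bijection' r m s hr hm hs
end

section
/- Let ρ₂ : G → ℂ* be projection to the second coordinate. Then the image of ρ₂ is exactly the group μ_{mr/gcd(r,s)} of (mr/gcd(r,s))-th roots of unity in ℂ*, and the kernel of ρ₂ has cardinality gcd(r,s). (This realizes (m₂, r₂) = (gcd(r,s), m·r/gcd(r,s)).) -/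
open Complex

/-- `ρ₁ : G → ℂ*`, projection of `G = ker φ` to the first coordinate. -/
noncomputable def rho1 (r m s : ℕ) : MonoidHom.ker (phi r m s) →* ℂˣ :=
  (MonoidHom.fst ℂˣ (ℂˣ × ℂˣ)).comp (MonoidHom.ker (phi r m s)).subtype

/-- `ρ₂ : G → ℂ*`, projection of `G = ker φ` to the second coordinate. -/
noncomputable def rho2 (r m s : ℕ) : MonoidHom.ker (phi r m s) →* ℂˣ :=
  ((MonoidHom.fst ℂˣ ℂˣ).comp (MonoidHom.snd ℂˣ (ℂˣ × ℂˣ))).comp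
    (MonoidHom.ker (phi r m s)).subtype

/-- `ρ₃ : G → ℂ*`, projection of `G = ker φ` to the third coordinate. -/
noncomputable def rho3 (r m s : ℕ) : MonoidHom.ker (phi r m s) →* ℂˣ :=
  ((MonoidHom.snd ℂˣ ℂˣ).comp (MonoidHom.snd ℂˣ (ℂˣ × ℂˣ))).comp
    (MonoidHom.ker (phi r m s)).subtype

lemma mem_ker_phi_iff (r m s : ℕ) (t : ℂˣ × ℂˣ × ℂˣ) :
    t ∈ MonoidHom.ker (phi r m s) ↔
      t.1 ^ r = 1 ∧ t.1 ^ (-(s : ℤ)) * t.2.1 ^ m = 1 ∧ t.1 * t.2.1 * t.2.2 = 1 := by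
  simp [phi, MonoidHom.mem_ker, Prod.ext_iff]

lemma mem_range_rho2_iff (r m s : ℕ) (ζ : ℂˣ) :
    ζ ∈ (rho2 r m s).range ↔ ∃ t₁ : ℂˣ, t₁ ^ r = 1 ∧ t₁ ^ s = ζ ^ m := by
  constructor
  · rintro ⟨⟨t, ht⟩, rfl⟩
    rw [mem_ker_phi_iff] at ht
    obtain ⟨h1, h2, -⟩ := ht
    refine ⟨t.1, h1, ?_⟩
    rw [zpow_neg, zpow_natCast, inv_mul_eq_one] at h2
    exact h2
  · rintro ⟨t₁, h1, h2⟩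
    refine ⟨⟨(t₁, ζ, (t₁ * ζ)⁻¹), ?_⟩, rfl⟩
    rw [mem_ker_phi_iff]
    refine ⟨h1, ?_, by simp [mul_assoc]⟩
    rw [zpow_neg, zpow_natCast, inv_mul_eq_one]
    exact h2

lemma exists_t1 (r s : ℕ) (hr : 0 < r) (ξ : ℂˣ)
    (hξ : ξ ^ (r / Nat.gcd r s) = 1) : ∃ t₁ : ℂˣ, t₁ ^ r = 1 ∧ t₁ ^ s = ξ := by
  set g := Nat.gcd r s with hgdef
  have hg : 0 < g := Nat.gcd_pos_of_pos_left s hr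
  set c := r / g with hcdef
  have hcg : c * g = r := Nat.div_mul_cancel (Nat.gcd_dvd_left r s)
  have hc : 0 < c := Nat.div_pos (Nat.le_of_dvd hr (Nat.gcd_dvd_left r s)) hg
  haveI : NeZero c := ⟨hc.ne'⟩
  set Ω : ℂ := Complex.exp (2 * Real.pi * I / r) with hΩdef
  have hΩ : IsPrimitiveRoot Ω r := Complex.isPrimitiveRoot_exp r hr.ne'
  set ω : ℂ := Complex.exp (2 * Real.pi * I / c) with hωdef
  have hω : IsPrimitiveRoot ω c := Complex.isPrimitiveRoot_exp c hc.ne'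
  have hΩg : Ω ^ g = ω := by
    rw [hΩdef, hωdef, ← Complex.exp_nat_mul]
    congr 1
    have h1 : (c : ℂ) * g = r := by exact_mod_cast hcg
    have hrne : (r : ℂ) ≠ 0 := Nat.cast_ne_zero.mpr hr.ne'
    have hcne : (c : ℂ) ≠ 0 := Nat.cast_ne_zero.mpr hc.ne'
    field_simp
    linear_combination h1
  have hξc : (ξ : ℂ) ^ c = 1 := by
    have := congrArg (Units.val) hξ
    push_cast at this
    exact this
  obtain ⟨k, -, hk⟩ := hω.eq_pow_of_pow_eq_one hξc
  set Ωu : ℂˣ := unitExp (2 * Real.pi * I / r) with hΩudef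
  have hΩuval : (Ωu : ℂ) = Ω := rfl
  have hΩur : Ωu ^ r = 1 := by
    ext
    push_cast
    exact hΩ.pow_eq_one
  set a := Nat.gcdA r s with hadef
  set b := Nat.gcdB r s with hbdef
  have hbez : (g : ℤ) = r * a + s * b := Nat.gcd_eq_gcd_ab r s
  refine ⟨Ωu ^ ((k : ℤ) * b), ?_, ?_⟩
  · rw [← zpow_natCast (Ωu ^ ((k : ℤ) * b)) r, ← zpow_mul, mul_comm, zpow_mul, zpow_natCast,
      hΩur, one_zpow]
  · have key : (k : ℤ) * b * s = (g : ℤ) * k + (r : ℤ) * (-(k * a)) := by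
      linear_combination (-(k : ℤ)) * hbez
    rw [← zpow_natCast (Ωu ^ ((k : ℤ) * b)) s, ← zpow_mul, key, zpow_add, zpow_mul, zpow_mul]
    simp only [zpow_natCast]
    rw [hΩur, one_zpow, mul_one]
    ext
    push_cast
    rw [hΩuval, hΩg, hk]

/-- The image of `ρ₂ : G → ℂ*` is exactly `μ_{mr/gcd(r,s)}`, and the kernel of `ρ₂`
has cardinality `gcd(r,s)`. -/
theorem rho2_range_and_ker (r m s : ℕ) (hr : 1 ≤ r) (hm : 1 ≤ m) (hs : s ≤ r - 1) :
    (rho2 r m s).range = rootsOfUnity (m * r / Nat.gcd r s) ℂ ∧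
      Nat.card (MonoidHom.ker (rho2 r m s)) = Nat.gcd r s := by
  have hg : 0 < Nat.gcd r s := Nat.gcd_pos_of_pos_left s hr
  haveI : NeZero (Nat.gcd r s) := ⟨hg.ne'⟩
  have hmn : m * r / Nat.gcd r s = m * (r / Nat.gcd r s) :=
    Nat.mul_div_assoc m (Nat.gcd_dvd_left r s)
  constructor
  · ext ζ
    rw [mem_range_rho2_iff, _root_.mem_rootsOfUnity, hmn]
    constructor
    · rintro ⟨t₁, h1, h2⟩
      have hsr : s * (r / Nat.gcd r s) = r * (s / Nat.gcd r s) := by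
        rw [← Nat.mul_div_assoc s (Nat.gcd_dvd_left r s),
          ← Nat.mul_div_assoc r (Nat.gcd_dvd_right r s), mul_comm s r]
      rw [pow_mul, ← h2, ← pow_mul, hsr, pow_mul, h1, one_pow]
    · intro h
      apply exists_t1 r s hr
      rw [← pow_mul]
      exact h
  · have e : MonoidHom.ker (rho2 r m s) ≃ rootsOfUnity (Nat.gcd r s) ℂ :=
      { toFun := fun x => ⟨x.1.1.1, by
          have h2 : (x.1 : ℂˣ × ℂˣ × ℂˣ).2.1 = 1 := x.2
          obtain ⟨ha, hb, -⟩ := (mem_ker_phi_iff r m s x.1.1).mp x.1.2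
          rw [h2, one_pow, mul_one, zpow_neg, zpow_natCast, inv_eq_one] at hb
          rw [_root_.mem_rootsOfUnity]
          exact orderOf_dvd_iff_pow_eq_one.mp
            (Nat.dvd_gcd (orderOf_dvd_of_pow_eq_one ha) (orderOf_dvd_of_pow_eq_one hb))⟩
        invFun := fun y => ⟨⟨(y.1, 1, y.1⁻¹), by
            have hy : y.1 ^ Nat.gcd r s = 1 := (_root_.mem_rootsOfUnity _ y.1).mp y.2
            have key : ∀ b : ℕ, Nat.gcd r s ∣ b → y.1 ^ b = 1 := fun b hb =>
              orderOf_dvd_iff_pow_eq_one.mp ((orderOf_dvd_of_pow_eq_one hy).trans hb)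
            rw [mem_ker_phi_iff]
            refine ⟨key r (Nat.gcd_dvd_left r s), ?_, by simp⟩
            rw [one_pow, mul_one, zpow_neg, zpow_natCast, inv_eq_one]
            exact key s (Nat.gcd_dvd_right r s)⟩, rfl⟩
        left_inv := fun x => by
          have h2 : (x.1 : ℂˣ × ℂˣ × ℂˣ).2.1 = 1 := x.2
          have hk3 := ((mem_ker_phi_iff r m s x.1.1).mp x.1.2).2.2
          rw [h2, mul_one] at hk3
          exact Subtype.ext (Subtype.ext
            (Prod.ext rfl (Prod.ext h2.symm (eq_inv_of_mul_eq_one_right hk3).symm)))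
        right_inv := fun y => Subtype.ext rfl }
    rw [Nat.card_congr e, Complex.card_rootsOfUnity]
end
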